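/- Let (Ω, P) be a probability space, let y : ℤ → Ω → ℝ be a wide-sense stationary process with autocorrelation R : ℤ → ℝ, and let (d_t)_{t∈ℤ} be mutually independent random delays, each taking values in a fixed finite set J ⊆ ℤ with P(d_t = j) = p_j, with the whole delay family independent of the whole process y. Define u_t(ω) = y_{t − d_t(ω)}(ω), the mean-corruption output ū_t = Σ_{j∈J} p_j · y_{t−j}, and Δu_t = u_t − ū_t. Then: (i) E[u_t · u_s] = Σ_{j,l ∈ J} p_j · p_l · R(t − s − j + l) whenever t ≠ s, and E[u_t²] = R(0); (ii) E[Δu_t · Δu_s] = 0 whenever t ≠ s; and (iii) E[Δu_t²] = R(0) − Σ_{j,l ∈ J} p_j · p_l · R(j − l). (These are the autocorrelation and perturbation-noise computations for the random delay corruption model, giving Φ_{uu} = H Φ_{yy} H* + θ with θ constant.) -/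

import Mathlib

open MeasureTheory ProbabilityTheory

/-- autocorrelation and perturbation-noise computations for the random
delay corruption model. With mutually independent delays `(d t)`, independent of the
whole process `y`, and `u t ω = y (t - d t ω) ω`, `ū t = Σ_{j∈J} p j · y (t-j)`,
`Δu t = u t − ū t`:
(i) `E[u t · u s] = Σ_{j,l∈J} p j · p l · R (t − s − j + l)` for `t ≠ s`, and
`E[(u t)²] = R 0`;
(ii) `E[Δu t · Δu s] = 0` for `t ≠ s`;
(iii) `E[(Δu t)²] = R 0 − Σ_{j,l∈J} p j · p l · R (j − l)`. -/
theorem stmt14 {Ω : Type*} [MeasureSpace Ω] [IsProbabilityMeasure (volume : Measure Ω)]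
    (y : ℤ → Ω → ℝ) (hymeas : ∀ t, Measurable (y t))
    (hyL2 : ∀ t, MemLp (y t) 2 volume)
    (R : ℤ → ℝ) (hWSS : ∀ t k : ℤ, ∫ ω, y (t + k) ω * y t ω = R k)
    (d : ℤ → Ω → ℤ) (hdmeas : ∀ t, Measurable (d t))
    (J : Finset ℤ) (hdJ : ∀ t ω, d t ω ∈ J)
    (p : ℤ → ℝ) (hp : ∀ t, ∀ j ∈ J, (volume {ω | d t ω = j}).toReal = p j)
    (hdiid : iIndepFun d volume)
    (hindep : IndepFun (fun ω => fun t : ℤ => d t ω)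
      (fun ω => fun t : ℤ => y t ω) volume)
    (u : ℤ → Ω → ℝ) (hu : ∀ t ω, u t ω = y (t - d t ω) ω)
    (ubar : ℤ → Ω → ℝ) (hubar : ∀ t ω, ubar t ω = ∑ j ∈ J, p j * y (t - j) ω)
    (Δu : ℤ → Ω → ℝ) (hΔu : ∀ t ω, Δu t ω = u t ω - ubar t ω) :
    (∀ t s : ℤ, t ≠ s →
        ∫ ω, u t ω * u s ω = ∑ j ∈ J, ∑ l ∈ J, p j * p l * R (t - s - j + l)) ∧
    (∀ t : ℤ, ∫ ω, (u t ω) ^ 2 = R 0) ∧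
    (∀ t s : ℤ, t ≠ s → ∫ ω, Δu t ω * Δu s ω = 0) ∧
    (∀ t : ℤ, ∫ ω, (Δu t ω) ^ 2 = R 0 - ∑ j ∈ J, ∑ l ∈ J, p j * p l * R (j - l)) := by
  -- general autocorrelation form
  have hR : ∀ a b : ℤ, ∫ ω, y a ω * y b ω = R (a - b) := by
    intro a b
    have h := hWSS b (a - b)
    rwa [show b + (a - b) = a by ring] at h
  have hRsymm : ∀ k : ℤ, R (-k) = R k := by
    intro k
    have h1 := hR k 0
    have h2 := hR 0 k
    simp only [zero_sub, sub_zero] at h1 h2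
    rw [← h1, ← h2]
    exact integral_congr_ae (Filter.Eventually.of_forall fun ω => mul_comm _ _)
  -- integrability of products
  have hInt : ∀ a b : ℤ, Integrable (fun ω => y a ω * y b ω) volume := by
    intro a b
    refine Integrable.mono' (((hyL2 a).integrable_sq).add ((hyL2 b).integrable_sq))
      (((hymeas a).mul (hymeas b)).aestronglyMeasurable)
      (Filter.Eventually.of_forall fun ω => ?_)
    simp only [Pi.add_apply, Real.norm_eq_abs, abs_mul]
    nlinarith [sq_nonneg (|y a ω| - |y b ω|), sq_abs (y a ω), sq_abs (y b ω),
      abs_nonneg (y a ω), abs_nonneg (y b ω)]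
  have hAmeas : ∀ t j : ℤ, MeasurableSet {ω | d t ω = j} :=
    fun t j => (hdmeas t) (measurableSet_singleton j)
  -- key independence lemma
  have hkey : ∀ (φ : (ℤ → ℤ) → ℝ), Measurable φ → ∀ a b : ℤ,
      ∫ ω, φ (fun t => d t ω) * (y a ω * y b ω)
        = (∫ ω, φ (fun t => d t ω)) * R (a - b) := by
    intro φ hφ a b
    have hψ : Measurable (fun w : ℤ → ℝ => w a * w b) :=
      (measurable_pi_apply a).mul (measurable_pi_apply b)
    have hD : Measurable (fun ω => fun t : ℤ => d t ω) := measurable_pi_lambda _ hdmeas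
    have hY : Measurable (fun ω => fun t : ℤ => y t ω) := measurable_pi_lambda _ hymeas
    have hIF : IndepFun (φ ∘ (fun ω => fun t : ℤ => d t ω))
        ((fun w : ℤ → ℝ => w a * w b) ∘ (fun ω => fun t : ℤ => y t ω)) volume :=
      hindep.comp hφ hψ
    have h2 := hIF.integral_mul_eq_mul_integral ((hφ.comp hD).aestronglyMeasurable)
      ((hψ.comp hY).aestronglyMeasurable)
    have h3 : ∫ ω, φ (fun t => d t ω) * (y a ω * y b ω)
        = (∫ ω, φ (fun t => d t ω)) * ∫ ω, y a ω * y b ω := h2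
    rw [h3, hR a b]
  -- measurability of ite functions on the path space
  have hφ1 : ∀ t j : ℤ, Measurable (fun v : ℤ → ℤ => if v t = j then (1:ℝ) else 0) := by
    intro t j
    have hs : MeasurableSet {v : ℤ → ℤ | v t = j} := by
      have h : MeasurableSet ((fun v : ℤ → ℤ => v t) ⁻¹' {j}) :=
        (measurable_pi_apply t) (measurableSet_singleton j)
      exact h
    exact Measurable.ite hs measurable_const measurable_const
  -- single-indicator expectations
  have hPind : ∀ t j : ℤ, ∫ ω, (if d t ω = j then (1:ℝ) else 0)
      = (volume {ω | d t ω = j}).toReal := by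
    intro t j
    have heq : (fun ω => if d t ω = j then (1:ℝ) else 0)
        = Set.indicator {ω | d t ω = j} (fun _ => (1:ℝ)) := by
      funext ω; by_cases h : d t ω = j <;> simp [Set.indicator, h]
    rw [heq, integral_indicator_const (1:ℝ) (hAmeas t j)]
    simp [measureReal_def]
  have hterm1 : ∀ t j a b : ℤ,
      ∫ ω, (if d t ω = j then (1:ℝ) else 0) * (y a ω * y b ω)
        = (volume {ω | d t ω = j}).toReal * R (a - b) := by
    intro t j a b
    rw [hkey _ (hφ1 t j) a b, hPind t j]
  -- double-indicator expectations, t ≠ s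
  have hPP : ∀ t s j l : ℤ, t ≠ s →
      ∫ ω, (if d t ω = j then (1:ℝ) else 0) * (if d s ω = l then 1 else 0)
        = (volume {ω | d t ω = j}).toReal * (volume {ω | d s ω = l}).toReal := by
    intro t s j l hts
    have hind : IndepFun (d t) (d s) volume := hdiid.indepFun hts
    have hm := hind.measure_inter_preimage_eq_mul _ _ (measurableSet_singleton j)
      (measurableSet_singleton l)
    have hAB : MeasurableSet ((d t ⁻¹' {j}) ∩ (d s ⁻¹' {l})) :=
      (hAmeas t j).inter (hAmeas s l)
    have heq : (fun ω => (if d t ω = j then (1:ℝ) else 0) * (if d s ω = l then 1 else 0))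
        = Set.indicator ((d t ⁻¹' {j}) ∩ (d s ⁻¹' {l})) (fun _ => (1:ℝ)) := by
      funext ω
      by_cases h1 : d t ω = j <;> by_cases h2 : d s ω = l <;>
        simp [Set.indicator, h1, h2]
    rw [heq, integral_indicator_const (1:ℝ) hAB]
    have hj : d t ⁻¹' {j} = {ω | d t ω = j} := rfl
    have hl : d s ⁻¹' {l} = {ω | d s ω = l} := rfl
    rw [smul_eq_mul, mul_one, measureReal_def, hm, ENNReal.toReal_mul, hj, hl]
  have hterm2 : ∀ t s j l a b : ℤ, t ≠ s →
      ∫ ω, (if d t ω = j then (1:ℝ) else 0) * (if d s ω = l then 1 else 0) * (y a ω * y b ω)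
        = (volume {ω | d t ω = j}).toReal * (volume {ω | d s ω = l}).toReal * R (a - b) := by
    intro t s j l a b hts
    have hφ : Measurable (fun v : ℤ → ℤ =>
        (if v t = j then (1:ℝ) else 0) * (if v s = l then 1 else 0)) :=
      (hφ1 t j).mul (hφ1 s l)
    rw [hkey _ hφ a b, hPP t s j l hts]
  -- sum of probabilities is one
  have hpsum : ∑ j ∈ J, p j = 1 := by
    have hdisj : (J : Set ℤ).PairwiseDisjoint (fun j => {ω | d 0 ω = j}) := by
      intro j _ l _ hjl
      refine Set.disjoint_left.mpr fun ω h1 h2 => hjl ?_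
      simp only [Set.mem_setOf_eq] at h1 h2
      rw [← h1, ← h2]
    have hunion : (⋃ j ∈ J, {ω | d 0 ω = j}) = Set.univ := by
      ext ω
      simp only [Set.mem_iUnion, Set.mem_setOf_eq, Set.mem_univ, iff_true]
      exact ⟨d 0 ω, hdJ 0 ω, rfl⟩
    have hmeq : ∑ j ∈ J, volume {ω | d 0 ω = j} = 1 := by
      rw [← measure_biUnion_finset hdisj (fun j _ => hAmeas 0 j), hunion, measure_univ]
    calc ∑ j ∈ J, p j = ∑ j ∈ J, (volume {ω | d 0 ω = j}).toReal :=
          Finset.sum_congr rfl fun j hj => (hp 0 j hj).symm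
      _ = (∑ j ∈ J, volume {ω | d 0 ω = j}).toReal :=
          (ENNReal.toReal_sum fun j _ => measure_ne_top _ _).symm
      _ = 1 := by rw [hmeq]; simp
  -- indicator decomposition of u
  have hudecomp : ∀ t ω, u t ω = ∑ j ∈ J, (if d t ω = j then (1:ℝ) else 0) * y (t - j) ω := by
    intro t ω
    rw [hu]
    have h : ∀ j ∈ J, (if d t ω = j then (1:ℝ) else 0) * y (t - j) ω
        = if d t ω = j then y (t - j) ω else 0 := by
      intro j _; by_cases h : d t ω = j <;> simp [h]
    rw [Finset.sum_congr rfl h, Finset.sum_ite_eq J (d t ω) (fun j => y (t - j) ω),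
      if_pos (hdJ t ω)]
  -- term integrability
  have hIterm2 : ∀ t s j l a b : ℤ, Integrable (fun ω =>
      (if d t ω = j then (1:ℝ) else 0) * (if d s ω = l then 1 else 0) * (y a ω * y b ω))
      volume := by
    intro t s j l a b
    refine Integrable.bdd_mul (c := 1) (hInt a b) ?_ (Filter.Eventually.of_forall fun ω => ?_)
    · exact ((Measurable.ite (hAmeas t j) measurable_const measurable_const).mul
        (Measurable.ite (hAmeas s l) measurable_const measurable_const)).aestronglyMeasurable
    · by_cases h1 : d t ω = j <;> by_cases h2 : d s ω = l <;> simp [h1, h2]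
  have hIterm1 : ∀ t j a b : ℤ, Integrable (fun ω =>
      (if d t ω = j then (1:ℝ) else 0) * (y a ω * y b ω)) volume := by
    intro t j a b
    refine Integrable.bdd_mul (c := 1) (hInt a b) ?_ (Filter.Eventually.of_forall fun ω => ?_)
    · exact (Measurable.ite (hAmeas t j) measurable_const measurable_const).aestronglyMeasurable
    · by_cases h1 : d t ω = j <;> simp [h1]
  -- product decompositions
  have hequu : ∀ t s : ℤ, (fun ω => u t ω * u s ω) = fun ω => ∑ j ∈ J, ∑ l ∈ J,
      (if d t ω = j then (1:ℝ) else 0) * (if d s ω = l then 1 else 0)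
        * (y (t - j) ω * y (s - l) ω) := by
    intro t s
    funext ω
    rw [hudecomp t ω, hudecomp s ω, Finset.sum_mul_sum]
    exact Finset.sum_congr rfl fun j _ => Finset.sum_congr rfl fun l _ => by ring
  have hIuu : ∀ t s : ℤ, Integrable (fun ω => u t ω * u s ω) volume := by
    intro t s
    rw [hequu t s]
    exact integrable_finset_sum _ fun j _ => integrable_finset_sum _ fun l _ =>
      hIterm2 t s j l (t - j) (s - l)
  -- E[u t * u s] for t ≠ s
  have huu : ∀ t s : ℤ, t ≠ s →
      ∫ ω, u t ω * u s ω = ∑ j ∈ J, ∑ l ∈ J, p j * p l * R (t - s - j + l) := by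
    intro t s hts
    rw [hequu t s, integral_finset_sum _ (fun j _ => integrable_finset_sum _ fun l _ =>
      hIterm2 t s j l (t - j) (s - l))]
    refine Finset.sum_congr rfl fun j hj => ?_
    rw [integral_finset_sum _ (fun l _ => hIterm2 t s j l (t - j) (s - l))]
    refine Finset.sum_congr rfl fun l hl => ?_
    rw [hterm2 t s j l (t - j) (s - l) hts, hp t j hj, hp s l hl,
      show (t - j) - (s - l) = t - s - j + l by ring]
  -- E[u t * u t] = R 0
  have huut : ∀ t : ℤ, ∫ ω, u t ω * u t ω = R 0 := by
    intro t
    rw [hequu t t, integral_finset_sum _ (fun j _ => integrable_finset_sum _ fun l _ =>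
      hIterm2 t t j l (t - j) (t - l))]
    refine Eq.trans (Finset.sum_congr rfl fun j hj => ?_)
      (by rw [← Finset.sum_mul, hpsum, one_mul])
    rw [integral_finset_sum _ (fun l _ => hIterm2 t t j l (t - j) (t - l))]
    have hstep : ∀ j ∈ J, (∑ l ∈ J, ∫ ω,
        (if d t ω = j then (1:ℝ) else 0) * (if d t ω = l then 1 else 0)
          * (y (t - j) ω * y (t - l) ω)) = p j * R 0 := by
      intro j hj
      rw [Finset.sum_eq_single j]
      · have heq : (fun ω => (if d t ω = j then (1:ℝ) else 0) * (if d t ω = j then 1 else 0)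
            * (y (t - j) ω * y (t - j) ω))
            = fun ω => (if d t ω = j then (1:ℝ) else 0) * (y (t - j) ω * y (t - j) ω) := by
          funext ω; by_cases h : d t ω = j <;> simp [h]
        rw [heq, hterm1 t j (t - j) (t - j), hp t j hj, sub_self]
      · intro l _ hlj
        have heq : (fun ω => (if d t ω = j then (1:ℝ) else 0) * (if d t ω = l then 1 else 0)
            * (y (t - j) ω * y (t - l) ω)) = fun _ => (0:ℝ) := by
          funext ω
          by_cases h1 : d t ω = j
          · have h2 : ¬ (j = l) := fun h => hlj h.symm
            simp [h1, h2]
          · simp [h1]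
        rw [heq, integral_zero]
      · intro h; exact absurd hj h
    exact hstep j hj
  -- E[u t * ubar s]
  have hequb : ∀ t s : ℤ, (fun ω => u t ω * ubar s ω) = fun ω => ∑ j ∈ J, ∑ l ∈ J,
      p l * ((if d t ω = j then (1:ℝ) else 0) * (y (t - j) ω * y (s - l) ω)) := by
    intro t s
    funext ω
    rw [hudecomp t ω, hubar s ω, Finset.sum_mul_sum]
    exact Finset.sum_congr rfl fun j _ => Finset.sum_congr rfl fun l _ => by ring
  have hIub : ∀ t s : ℤ, Integrable (fun ω => u t ω * ubar s ω) volume := by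
    intro t s
    rw [hequb t s]
    exact integrable_finset_sum _ fun j _ => integrable_finset_sum _ fun l _ =>
      (hIterm1 t j (t - j) (s - l)).const_mul (p l)
  have hub : ∀ t s : ℤ, ∫ ω, u t ω * ubar s ω
      = ∑ j ∈ J, ∑ l ∈ J, p j * p l * R (t - s - j + l) := by
    intro t s
    rw [hequb t s, integral_finset_sum _ (fun j _ => integrable_finset_sum _ fun l _ =>
      (hIterm1 t j (t - j) (s - l)).const_mul (p l))]
    refine Finset.sum_congr rfl fun j hj => ?_
    rw [integral_finset_sum _ (fun l _ => (hIterm1 t j (t - j) (s - l)).const_mul (p l))]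
    refine Finset.sum_congr rfl fun l hl => ?_
    rw [integral_const_mul, hterm1 t j (t - j) (s - l), hp t j hj,
      show (t - j) - (s - l) = t - s - j + l by ring]
    ring
  -- E[ubar t * u s]
  have heqbu : ∀ t s : ℤ, (fun ω => ubar t ω * u s ω) = fun ω => ∑ j ∈ J, ∑ l ∈ J,
      p j * ((if d s ω = l then (1:ℝ) else 0) * (y (t - j) ω * y (s - l) ω)) := by
    intro t s
    funext ω
    rw [hubar t ω, hudecomp s ω, Finset.sum_mul_sum]
    exact Finset.sum_congr rfl fun j _ => Finset.sum_congr rfl fun l _ => by ring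
  have hIbu : ∀ t s : ℤ, Integrable (fun ω => ubar t ω * u s ω) volume := by
    intro t s
    rw [heqbu t s]
    exact integrable_finset_sum _ fun j _ => integrable_finset_sum _ fun l _ =>
      (hIterm1 s l (t - j) (s - l)).const_mul (p j)
  have hbu : ∀ t s : ℤ, ∫ ω, ubar t ω * u s ω
      = ∑ j ∈ J, ∑ l ∈ J, p j * p l * R (t - s - j + l) := by
    intro t s
    rw [heqbu t s, integral_finset_sum _ (fun j _ => integrable_finset_sum _ fun l _ =>
      (hIterm1 s l (t - j) (s - l)).const_mul (p j))]
    refine Finset.sum_congr rfl fun j hj => ?_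
    rw [integral_finset_sum _ (fun l _ => (hIterm1 s l (t - j) (s - l)).const_mul (p j))]
    refine Finset.sum_congr rfl fun l hl => ?_
    rw [integral_const_mul, hterm1 s l (t - j) (s - l), hp s l hl,
      show (t - j) - (s - l) = t - s - j + l by ring]
    ring
  -- E[ubar t * ubar s]
  have heqbb : ∀ t s : ℤ, (fun ω => ubar t ω * ubar s ω) = fun ω => ∑ j ∈ J, ∑ l ∈ J,
      (p j * p l) * (y (t - j) ω * y (s - l) ω) := by
    intro t s
    funext ω
    rw [hubar t ω, hubar s ω, Finset.sum_mul_sum]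
    exact Finset.sum_congr rfl fun j _ => Finset.sum_congr rfl fun l _ => by ring
  have hIbb : ∀ t s : ℤ, Integrable (fun ω => ubar t ω * ubar s ω) volume := by
    intro t s
    rw [heqbb t s]
    exact integrable_finset_sum _ fun j _ => integrable_finset_sum _ fun l _ =>
      (hInt (t - j) (s - l)).const_mul (p j * p l)
  have hbb : ∀ t s : ℤ, ∫ ω, ubar t ω * ubar s ω
      = ∑ j ∈ J, ∑ l ∈ J, p j * p l * R (t - s - j + l) := by
    intro t s
    rw [heqbb t s, integral_finset_sum _ (fun j _ => integrable_finset_sum _ fun l _ =>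
      (hInt (t - j) (s - l)).const_mul (p j * p l))]
    refine Finset.sum_congr rfl fun j _ => ?_
    rw [integral_finset_sum _ (fun l _ => (hInt (t - j) (s - l)).const_mul (p j * p l))]
    refine Finset.sum_congr rfl fun l _ => ?_
    rw [integral_const_mul, hR (t - j) (s - l),
      show (t - j) - (s - l) = t - s - j + l by ring]
  -- Δu expectation
  have hdel : ∀ t s : ℤ, ∫ ω, Δu t ω * Δu s ω
      = (∫ ω, u t ω * u s ω) - ∑ j ∈ J, ∑ l ∈ J, p j * p l * R (t - s - j + l) := by
    intro t s
    have hexp : (fun ω => Δu t ω * Δu s ω) = fun ω =>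
        u t ω * u s ω - u t ω * ubar s ω - ubar t ω * u s ω + ubar t ω * ubar s ω := by
      funext ω; rw [hΔu, hΔu]; ring
    have i1 : Integrable (fun ω => u t ω * u s ω - u t ω * ubar s ω) volume :=
      (hIuu t s).sub (hIub t s)
    have i2 : Integrable
        (fun ω => u t ω * u s ω - u t ω * ubar s ω - ubar t ω * u s ω) volume :=
      i1.sub (hIbu t s)
    rw [hexp, integral_add i2 (hIbb t s), integral_sub i1 (hIbu t s),
      integral_sub (hIuu t s) (hIub t s), hub t s, hbu t s, hbb t s]
    ring
  refine ⟨huu, ?_, ?_, ?_⟩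
  · intro t
    simp only [pow_two]
    exact huut t
  · intro t s hts
    rw [hdel t s, huu t s hts, sub_self]
  · intro t
    simp only [pow_two]
    rw [hdel t t, huut t]
    congr 1
    refine Finset.sum_congr rfl fun j _ => Finset.sum_congr rfl fun l _ => ?_
    rw [show t - t - j + l = -(j - l) by ring, hRsymm (j - l)]
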